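/- arXiv:2204.08416 — 2 statements merged into one kernel-verified Lean document; each statement's English description precedes it below -/
import Mathlib

section
/- Let G and H be simple graphs with δ(G) ≥ 2 and δ(H) ≥ 2. Then Cc(G × H) ≤ Cc(G) · Cc(H). -/
variable {α β : Type*}

/-- Tensor (categorical) product of simple graphs. -/
def tensorProdG (G : SimpleGraph α) (H : SimpleGraph β) : SimpleGraph (α × β) where
  Adj x y := G.Adj x.1 y.1 ∧ H.Adj x.2 y.2
  symm := ⟨fun _ _ h => ⟨h.1.symm, h.2.symm⟩⟩
  loopless := ⟨fun x h => G.loopless.irrefl x.1 h.1⟩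

instance (G : SimpleGraph α) (H : SimpleGraph β) [DecidableRel G.Adj] [DecidableRel H.Adj] :
    DecidableRel (tensorProdG G H).Adj := fun x y =>
      inferInstanceAs (Decidable (G.Adj x.1 y.1 ∧ H.Adj x.2 y.2))

/-- Number of triangles incident to `u`: edges of the induced neighborhood. -/
noncomputable def triCount (G : SimpleGraph α) [Fintype α] (u : α) : ℕ :=
  Nat.card (SimpleGraph.induce (G.neighborSet u) G).edgeSet

/-- Local clustering coefficient. -/
noncomputable def locCc (G : SimpleGraph α) [Fintype α] [DecidableRel G.Adj] (u : α) : ℝ :=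
  if 2 ≤ G.degree u then (triCount G u : ℝ) / ((G.degree u).choose 2) else 0

/-- Global clustering coefficient. -/
noncomputable def globCc (G : SimpleGraph α) [Fintype α] [DecidableRel G.Adj] : ℝ :=
  (∑ v, locCc G v) / (Fintype.card α)

/-- Minimum degree of the induced neighborhood of `u`. -/
noncomputable def nbrMinDeg (G : SimpleGraph α) [Fintype α] [DecidableRel G.Adj] (u : α) : ℕ :=
  (SimpleGraph.induce (G.neighborSet u) G).minDegree

/-- Average degree, as a real number. -/
noncomputable def avgDeg (G : SimpleGraph α) [Fintype α] [DecidableRel G.Adj] : ℝ :=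
  (∑ v, (G.degree v : ℝ)) / (Fintype.card α)

open SimpleGraph

lemma nat_card_dart (G : SimpleGraph α) [Fintype α] :
    Nat.card G.Dart = 2 * Nat.card G.edgeSet := by
  classical
  rw [Nat.card_eq_fintype_card, Nat.card_eq_fintype_card, G.dart_card_eq_twice_card_edges,
    edgeFinset, Set.toFinset_card]

lemma choose_key {a b : ℕ} (ha : 2 ≤ a) (hb : 2 ≤ b) :
    2 * ((a.choose 2 : ℝ) * (b.choose 2)) ≤ ((a * b).choose 2 : ℝ) := by
  have ha' : (2:ℝ) ≤ a := by exact_mod_cast ha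
  have hb' : (2:ℝ) ≤ b := by exact_mod_cast hb
  rw [Nat.cast_choose_two, Nat.cast_choose_two, Nat.cast_choose_two, Nat.cast_mul]
  nlinarith [mul_nonneg (by linarith : (0:ℝ) ≤ (a:ℝ)) (by linarith : (0:ℝ) ≤ (b:ℝ))]

section
variable [Fintype α] [Fintype β] (G : SimpleGraph α) (H : SimpleGraph β)

/-- Darts of the induced neighborhood of the tensor product correspond to pairs of darts. -/
def dartEquiv (u : α) (v : β) :
    ((tensorProdG G H).induce ((tensorProdG G H).neighborSet (u, v))).Dart ≃
      (G.induce (G.neighborSet u)).Dart × (H.induce (H.neighborSet v)).Dart where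
  toFun d :=
    (⟨(⟨d.fst.1.1, d.fst.2.1⟩, ⟨d.snd.1.1, d.snd.2.1⟩), d.adj.1⟩,
     ⟨(⟨d.fst.1.2, d.fst.2.2⟩, ⟨d.snd.1.2, d.snd.2.2⟩), d.adj.2⟩)
  invFun p :=
    ⟨(⟨(p.1.fst.1, p.2.fst.1), p.1.fst.2, p.2.fst.2⟩,
      ⟨(p.1.snd.1, p.2.snd.1), p.1.snd.2, p.2.snd.2⟩), p.1.adj, p.2.adj⟩
  left_inv _ := rfl
  right_inv _ := rfl

lemma triCount_tensor (u : α) (v : β) :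
    triCount (tensorProdG G H) (u, v) = 2 * (triCount G u * triCount H v) := by
  haveI : Fintype ↥((tensorProdG G H).neighborSet (u, v)) := Fintype.ofFinite _
  haveI : Fintype ↥(G.neighborSet u) := Fintype.ofFinite _
  haveI : Fintype ↥(H.neighborSet v) := Fintype.ofFinite _
  have h := nat_card_dart ((tensorProdG G H).induce ((tensorProdG G H).neighborSet (u, v)))
  rw [Nat.card_congr (dartEquiv G H u v), Nat.card_prod, nat_card_dart, nat_card_dart] at h
  unfold triCount
  exact Nat.eq_of_mul_eq_mul_left two_pos (h.symm.trans (by ring))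

variable [DecidableRel G.Adj] [DecidableRel H.Adj]

lemma degree_tensor (u : α) (v : β) :
    (tensorProdG G H).degree (u, v) = G.degree u * H.degree v := by
  have h : (tensorProdG G H).neighborFinset (u, v) =
      (G.neighborFinset u) ×ˢ (H.neighborFinset v) := by
    ext ⟨a, b⟩
    simp only [mem_neighborFinset, Finset.mem_product]
    rfl
  rw [← card_neighborFinset_eq_degree, ← card_neighborFinset_eq_degree,
    ← card_neighborFinset_eq_degree, h, Finset.card_product]

lemma locCc_tensor_le {u : α} {v : β} (hu : 2 ≤ G.degree u) (hv : 2 ≤ H.degree v) :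
    locCc (tensorProdG G H) (u, v) ≤ locCc G u * locCc H v := by
  have hd := degree_tensor G H u v
  have h2 : 2 ≤ (tensorProdG G H).degree (u, v) := by
    rw [hd]; calc 2 ≤ 2 * 2 := by norm_num
      _ ≤ G.degree u * H.degree v := Nat.mul_le_mul hu hv
  rw [locCc, if_pos h2, locCc, if_pos hu, locCc, if_pos hv, triCount_tensor, hd]
  have hA : (0:ℝ) < ((G.degree u).choose 2 : ℝ) := by
    exact_mod_cast Nat.choose_pos hu
  have hB : (0:ℝ) < ((H.degree v).choose 2 : ℝ) := by
    exact_mod_cast Nat.choose_pos hv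
  have hC : (0:ℝ) < (((G.degree u) * (H.degree v)).choose 2 : ℝ) := by
    exact_mod_cast Nat.choose_pos (le_trans (by norm_num : 2 ≤ 2*2) (Nat.mul_le_mul hu hv))
  have key := choose_key hu hv
  have ht : (0:ℝ) ≤ (triCount G u : ℝ) * (triCount H v : ℝ) := by positivity
  rw [div_mul_div_comm, div_le_div_iff₀ hC (by positivity)]
  push_cast
  nlinarith [mul_le_mul_of_nonneg_left key ht]

end

variable [Fintype α] [Fintype β] (G : SimpleGraph α) (H : SimpleGraph β)
  [DecidableRel G.Adj] [DecidableRel H.Adj]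

theorem tensor_globCc_le (hG : ∀ u : α, 2 ≤ G.degree u) (hH : ∀ v : β, 2 ≤ H.degree v) :
    globCc (tensorProdG G H) ≤ globCc G * globCc H := by
  by_cases hn : Fintype.card α = 0
  · simp [globCc, Fintype.card_prod, hn]
  by_cases hm : Fintype.card β = 0
  · simp [globCc, Fintype.card_prod, hm]
  have hn' : (0:ℝ) < Fintype.card α := by
    have := Nat.pos_of_ne_zero hn; exact_mod_cast this
  have hm' : (0:ℝ) < Fintype.card β := by
    have := Nat.pos_of_ne_zero hm; exact_mod_cast this
  have hsum : ∑ x : α × β, locCc (tensorProdG G H) x ≤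
      (∑ u, locCc G u) * (∑ v, locCc H v) := by
    rw [Fintype.sum_prod_type, Finset.sum_mul_sum]
    exact Finset.sum_le_sum fun u _ => Finset.sum_le_sum fun v _ =>
      locCc_tensor_le G H (hG u) (hH v)
  rw [globCc, globCc, globCc, Fintype.card_prod, div_mul_div_comm, Nat.cast_mul]
  exact (div_le_div_iff_of_pos_right (by positivity)).mpr hsum
end

section
/- Let G and H be simple graphs with δ(G) ≥ 2 and δ(H) ≥ 2. Set σ_G = min_{u ∈ V(G)} δ(⟨N_G(u)⟩) and σ_H = min_{v ∈ V(H)} δ(⟨N_H(v)⟩), and let d̂_G and d̂_H be the average degrees of G and H. Then Cc(G × H) ≥ σ_G · σ_H / (d̂_G · d̂_H − 1). -/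
variable {α β : Type*}

open Finset SimpleGraph

lemma tensor_nbrSet (G : SimpleGraph α) (H : SimpleGraph β) (p : α × β) :
    (tensorProdG G H).neighborSet p = (G.neighborSet p.1) ×ˢ (H.neighborSet p.2) := rfl

lemma tensor_degree [Fintype α] [Fintype β] (G : SimpleGraph α) (H : SimpleGraph β)
    [DecidableRel G.Adj] [DecidableRel H.Adj] (p : α × β) :
    (tensorProdG G H).degree p = G.degree p.1 * H.degree p.2 := by
  classical
  simp only [← card_neighborSet_eq_degree, ← Nat.card_eq_fintype_card]
  exact (Nat.card_congr (Equiv.Set.prod (G.neighborSet p.1) (H.neighborSet p.2))).trans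
    (Nat.card_prod _ _)

lemma twice_natcard_edgeSet {γ : Type*} (K : SimpleGraph γ) [Fintype γ] [DecidableRel K.Adj] :
    2 * Nat.card K.edgeSet = ∑ a, K.degree a := by
  classical
  rw [Nat.card_eq_fintype_card, ← edgeFinset_card, sum_degrees_eq_twice_card_edges]

/-- The induced neighborhood of `(u,v)` in the tensor product is isomorphic to the
tensor product of the induced neighborhoods. -/
noncomputable def tensorNbrIso [Fintype α] [Fintype β] (G : SimpleGraph α) (H : SimpleGraph β)
    (u : α) (v : β) :
    SimpleGraph.induce ((tensorProdG G H).neighborSet (u, v)) (tensorProdG G H) ≃g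
      tensorProdG (SimpleGraph.induce (G.neighborSet u) G)
        (SimpleGraph.induce (H.neighborSet v) H) where
  toEquiv := Equiv.Set.prod (G.neighborSet u) (H.neighborSet v)
  map_rel_iff' := Iff.rfl

lemma two_mul_triCount_tensor [Fintype α] [Fintype β] (G : SimpleGraph α) (H : SimpleGraph β)
    [DecidableRel G.Adj] [DecidableRel H.Adj] (u : α) (v : β) :
    2 * triCount (tensorProdG G H) (u, v) = (2 * triCount G u) * (2 * triCount H v) := by
  classical
  unfold triCount
  rw [Nat.card_congr (tensorNbrIso G H u v).mapEdgeSet, twice_natcard_edgeSet,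
    twice_natcard_edgeSet, twice_natcard_edgeSet]
  simp only [tensor_degree, Finset.sum_mul_sum, Fintype.sum_prod_type]

lemma deg_mul_minDeg_le [Fintype α] (G : SimpleGraph α) [DecidableRel G.Adj] (u : α) :
    G.degree u * nbrMinDeg G u ≤ 2 * triCount G u := by
  classical
  unfold triCount
  rw [twice_natcard_edgeSet]
  calc G.degree u * nbrMinDeg G u = ∑ _a : ↥(G.neighborSet u), nbrMinDeg G u := by
        rw [Finset.sum_const, card_univ, card_neighborSet_eq_degree, smul_eq_mul]
    _ ≤ _ := Finset.sum_le_sum fun a _ => minDegree_le_degree _ a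

lemma locCc_tensor_ge [Fintype α] [Fintype β] (G : SimpleGraph α) (H : SimpleGraph β)
    [DecidableRel G.Adj] [DecidableRel H.Adj] {sG sH : ℕ}
    (hsG : ∀ u, sG ≤ nbrMinDeg G u) (hsH : ∀ v, sH ≤ nbrMinDeg H v)
    (hG : ∀ u, 2 ≤ G.degree u) (hH : ∀ v, 2 ≤ H.degree v) (p : α × β) :
    (sG : ℝ) * sH / ((G.degree p.1 : ℝ) * (H.degree p.2 : ℝ) - 1)
      ≤ locCc (tensorProdG G H) p := by
  classical
  have hd : (tensorProdG G H).degree p = G.degree p.1 * H.degree p.2 := tensor_degree G H p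
  have h4 : 4 ≤ G.degree p.1 * H.degree p.2 := by
    calc 4 = 2 * 2 := rfl
    _ ≤ _ := Nat.mul_le_mul (hG p.1) (hH p.2)
  have h2 : 2 ≤ (tensorProdG G H).degree p := by rw [hd]; omega
  have key : G.degree p.1 * H.degree p.2 * (sG * sH) ≤ 2 * triCount (tensorProdG G H) p := by
    obtain ⟨p1, p2⟩ := p
    rw [two_mul_triCount_tensor]
    calc G.degree p1 * H.degree p2 * (sG * sH)
        = (G.degree p1 * sG) * (H.degree p2 * sH) := by ring
      _ ≤ (2 * triCount G p1) * (2 * triCount H p2) :=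
        Nat.mul_le_mul
          ((Nat.mul_le_mul_left _ (hsG p1)).trans (deg_mul_minDeg_le G p1))
          ((Nat.mul_le_mul_left _ (hsH p2)).trans (deg_mul_minDeg_le H p2))
  rw [locCc, if_pos h2, hd]
  have hkey : (G.degree p.1 : ℝ) * H.degree p.2 * (sG * sH)
      ≤ 2 * triCount (tensorProdG G H) p := by exact_mod_cast key
  have hd4 : (4:ℝ) ≤ (G.degree p.1 : ℝ) * H.degree p.2 := by exact_mod_cast h4
  rw [Nat.cast_choose_two]
  push_cast
  rw [div_le_div_iff₀ (by linarith) (by nlinarith)]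
  nlinarith [mul_le_mul_of_nonneg_left hkey
    (show (0:ℝ) ≤ ((G.degree p.1 : ℝ) * H.degree p.2 - 1) / 2 by linarith)]

theorem tensor_globCc_lower_bound [Fintype α] [Fintype β] [Nonempty α] [Nonempty β]
    (G : SimpleGraph α) (H : SimpleGraph β) [DecidableRel G.Adj] [DecidableRel H.Adj]
    (hG : ∀ u : α, 2 ≤ G.degree u) (hH : ∀ v : β, 2 ≤ H.degree v) :
    globCc (tensorProdG G H) ≥
      ((Finset.univ.inf' Finset.univ_nonempty (nbrMinDeg G) : ℕ) : ℝ) *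
        ((Finset.univ.inf' Finset.univ_nonempty (nbrMinDeg H) : ℕ) : ℝ) /
          (avgDeg G * avgDeg H - 1) := by
  classical
  set sG : ℕ := Finset.univ.inf' Finset.univ_nonempty (nbrMinDeg G) with hsGdef
  set sH : ℕ := Finset.univ.inf' Finset.univ_nonempty (nbrMinDeg H) with hsHdef
  have hsG : ∀ u, sG ≤ nbrMinDeg G u := fun u => Finset.inf'_le _ (Finset.mem_univ u)
  have hsH : ∀ v, sH ≤ nbrMinDeg H v := fun v => Finset.inf'_le _ (Finset.mem_univ v)
  set n : ℝ := (Fintype.card α : ℝ) with hn_def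
  set m : ℝ := (Fintype.card β : ℝ) with hm_def
  have hn : 0 < n := by rw [hn_def]; exact_mod_cast Fintype.card_pos
  have hm : 0 < m := by rw [hm_def]; exact_mod_cast Fintype.card_pos
  set x : α × β → ℝ := fun p => (G.degree p.1 : ℝ) * (H.degree p.2 : ℝ) - 1 with hx
  have hx3 : ∀ p, (3:ℝ) ≤ x p := by
    intro p
    have h1 : (2:ℝ) ≤ G.degree p.1 := by exact_mod_cast hG p.1
    have h2 : (2:ℝ) ≤ H.degree p.2 := by exact_mod_cast hH p.2
    simp only [hx]; nlinarith
  have hxpos : ∀ p, 0 < x p := fun p => lt_of_lt_of_le (by norm_num) (hx3 p)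
  have hSG : ∑ u, (G.degree u : ℝ) = n * avgDeg G := by
    rw [avgDeg, hn_def]; field_simp
  have hSH : ∑ v, (H.degree v : ℝ) = m * avgDeg H := by
    rw [avgDeg, hm_def]; field_simp
  have hA : (2:ℝ) ≤ avgDeg G := by
    rw [avgDeg, le_div_iff₀ hn]
    calc (2:ℝ) * n = ∑ _u : α, (2:ℝ) := by
          rw [Finset.sum_const, card_univ, hn_def, nsmul_eq_mul]; ring
      _ ≤ _ := Finset.sum_le_sum fun u _ => by exact_mod_cast hG u
  have hB : (2:ℝ) ≤ avgDeg H := by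
    rw [avgDeg, le_div_iff₀ hm]
    calc (2:ℝ) * m = ∑ _v : β, (2:ℝ) := by
          rw [Finset.sum_const, card_univ, hm_def, nsmul_eq_mul]; ring
      _ ≤ _ := Finset.sum_le_sum fun v _ => by exact_mod_cast hH v
  have hD : (0:ℝ) < avgDeg G * avgDeg H - 1 := by nlinarith
  have hsum : ∑ p : α × β, x p = n * m * (avgDeg G * avgDeg H - 1) := by
    simp only [hx]
    rw [Finset.sum_sub_distrib]
    have h1 : ∑ p : α × β, (G.degree p.1 : ℝ) * (H.degree p.2 : ℝ)
        = (∑ u, (G.degree u : ℝ)) * (∑ v, (H.degree v : ℝ)) := by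
      simp only [Fintype.sum_prod_type, Finset.sum_mul_sum]
    rw [h1, hSG, hSH, Finset.sum_const, card_univ, Fintype.card_prod, nsmul_eq_mul]
    push_cast
    rw [← hn_def, ← hm_def]
    ring
  -- Cauchy–Schwarz
  have hCS : (n * m) ^ 2 ≤ (∑ p : α × β, x p) * (∑ p : α × β, (x p)⁻¹) := by
    have h := Finset.sum_mul_sq_le_sq_mul_sq Finset.univ
      (fun p : α × β => Real.sqrt (x p)) (fun p => (Real.sqrt (x p))⁻¹)
    have e1 : ∑ p : α × β, Real.sqrt (x p) * (Real.sqrt (x p))⁻¹ = n * m := by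
      have h1 : ∀ p : α × β, Real.sqrt (x p) * (Real.sqrt (x p))⁻¹ = 1 := fun p =>
        mul_inv_cancel₀ (Real.sqrt_ne_zero'.mpr (hxpos p))
      rw [Finset.sum_congr rfl fun p _ => h1 p, Finset.sum_const, card_univ,
        Fintype.card_prod, nsmul_eq_mul, mul_one]
      push_cast; rw [← hn_def, ← hm_def]
    have e2 : ∀ p : α × β, Real.sqrt (x p) ^ 2 = x p := fun p =>
      Real.sq_sqrt (hxpos p).le
    have e3 : ∀ p : α × β, ((Real.sqrt (x p))⁻¹) ^ 2 = (x p)⁻¹ := fun p => by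
      rw [inv_pow, e2]
    calc (n * m) ^ 2 = (∑ p : α × β, Real.sqrt (x p) * (Real.sqrt (x p))⁻¹) ^ 2 := by
          rw [e1]
      _ ≤ _ := by
          refine (Finset.sum_mul_sq_le_sq_mul_sq _ _ _).trans ?_
          rw [Finset.sum_congr rfl fun p _ => e2 p, Finset.sum_congr rfl fun p _ => e3 p]
  have hsumx_pos : (0:ℝ) < ∑ p : α × β, x p := by
    rw [hsum]; positivity
  have hinvsum : n * m / (avgDeg G * avgDeg H - 1) ≤ ∑ p : α × β, (x p)⁻¹ := by
    rw [div_le_iff₀ hD]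
    have h2 : (n * m) ^ 2 / (∑ p : α × β, x p) ≤ ∑ p : α × β, (x p)⁻¹ :=
      (div_le_iff₀ hsumx_pos).2 (by linarith [hCS])
    calc (∑ p : α × β, (x p)⁻¹) * (avgDeg G * avgDeg H - 1)
        ≥ ((n * m) ^ 2 / (∑ p : α × β, x p)) * (avgDeg G * avgDeg H - 1) := by
          exact mul_le_mul_of_nonneg_right h2 hD.le
      _ = n * m := by rw [hsum]; field_simp
  have hcard : ((Fintype.card (α × β) : ℕ) : ℝ) = n * m := by
    rw [Fintype.card_prod]; push_cast; rw [← hn_def, ← hm_def]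
  rw [ge_iff_le, globCc, hcard]
  calc (sG:ℝ) * sH / (avgDeg G * avgDeg H - 1)
      = (sG:ℝ) * sH * ((n * m) / (avgDeg G * avgDeg H - 1)) / (n * m) := by
        field_simp
    _ ≤ (sG:ℝ) * sH * (∑ p : α × β, (x p)⁻¹) / (n * m) := by
        gcongr
    _ = (∑ p : α × β, (sG:ℝ) * sH / x p) / (n * m) := by
        rw [Finset.mul_sum]; simp only [div_eq_mul_inv]
    _ ≤ (∑ p : α × β, locCc (tensorProdG G H) p) / (n * m) := by
        gcongr with p hp
        exact locCc_tensor_ge G H hsG hsH hG hH p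
end
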